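/- arXiv:1010.4847 — 2 statements merged into one kernel-verified Lean document; each statement's English description precedes it below -/
import Mathlib

section
/- For ±1-walks of length n starting at 0 and ending at n mod 2 ∈ {0,1}, and 0 ≤ d ≤ ⌊n/2⌋: the number of such walks whose partial sum sequence contains at least d alternating visits (read backwards) to 1 and −1, ending (in the backward reading) with a visit to −1, equals C(n, ⌈n/2⌉ + d). -/
def psum {n : ℕ} (w : Fin n → ℤ) (k : ℕ) : ℤ :=
  ∑ i ∈ Finset.univ.filter (fun i : Fin n => (i : ℕ) < k), w i

namespace WalkAux

variable {n : ℕ}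

def Steps (w : Fin n → ℤ) : Prop := ∀ i, w i = 1 ∨ w i = -1

/-- depth-`d` alternating backward visit property, first target `ε`. -/
def P (w : Fin n → ℤ) (d : ℕ) (ε : ℤ) : Prop :=
  ∃ f : Fin d → ℕ, StrictAnti f ∧ (∀ j, f j ≤ n) ∧
    ∀ j : Fin d, psum w (f j) = ε * (-1) ^ (j : ℕ)

lemma psum_zero (w : Fin n → ℤ) : psum w 0 = 0 := by simp [psum]

lemma psum_succ (w : Fin n → ℤ) (k : ℕ) (hk : k < n) :
    psum w (k + 1) = psum w k + w ⟨k, hk⟩ := by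
  unfold psum
  have h : Finset.univ.filter (fun i : Fin n => (i : ℕ) < k + 1)
      = insert ⟨k, hk⟩ (Finset.univ.filter (fun i : Fin n => (i : ℕ) < k)) := by
    ext i
    simp [Fin.ext_iff]
    omega
  rw [h, Finset.sum_insert (by simp)]
  ring

lemma psum_neg (w : Fin n → ℤ) (k : ℕ) :
    psum (fun i => -(w i)) k = -psum w k := by
  simp [psum]

lemma steps_neg {w : Fin n → ℤ} (hw : Steps w) : Steps (fun i => -(w i)) := by
  intro i; rcases hw i with h | h <;> simp [h]

/-- discrete intermediate value theorem, ascending form. -/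
lemma ivt_up {w : Fin n → ℤ} (hw : Steps w) (x : ℤ) (a b : ℕ) (hab : a ≤ b) (hbn : b ≤ n)
    (h1 : psum w a ≤ x) (h2 : x ≤ psum w b) :
    ∃ k, a ≤ k ∧ k ≤ b ∧ psum w k = x := by
  induction b, hab using Nat.le_induction with
  | base => exact ⟨a, le_refl a, le_refl a, le_antisymm h1 h2⟩
  | succ b hab ih =>
    have hbn' : b < n := hbn
    rw [psum_succ w b hbn'] at h2
    by_cases hx : x ≤ psum w b
    · obtain ⟨k, hk1, hk2, hk3⟩ := ih (le_of_lt hbn') hx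
      exact ⟨k, hk1, le_trans hk2 (Nat.le_succ b), hk3⟩
    · push_neg at hx
      refine ⟨b + 1, by omega, le_refl _, ?_⟩
      rw [psum_succ w b hbn']
      rcases hw ⟨b, hbn'⟩ with h | h <;> rw [h] at h2 ⊢ <;> omega

/-- descending form. -/
lemma ivt_down {w : Fin n → ℤ} (hw : Steps w) (x : ℤ) (a b : ℕ) (hab : a ≤ b) (hbn : b ≤ n)
    (h1 : x ≤ psum w a) (h2 : psum w b ≤ x) :
    ∃ k, a ≤ k ∧ k ≤ b ∧ psum w k = x := by
  obtain ⟨k, hk1, hk2, hk3⟩ := ivt_up (steps_neg hw) (-x) a b hab hbn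
    (by rw [psum_neg]; omega) (by rw [psum_neg]; omega)
  rw [psum_neg] at hk3
  exact ⟨k, hk1, hk2, by omega⟩

/-- the reflection time: last `k ≤ n` with partial sum `-1`. -/
def tt (w : Fin n → ℤ) : ℕ := Nat.findGreatest (fun k => psum w k = -1) n

/-- the reflection map. -/
def rho (w : Fin n → ℤ) : Fin n → ℤ :=
  fun i => if (i : ℕ) < tt w then w i else -(w i)

lemma psum_rhoGen (w : Fin n → ℤ) (t k : ℕ) :
    psum (fun i : Fin n => if (i : ℕ) < t then w i else -(w i)) k
      = 2 * psum w (min k t) - psum w k := by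
  have key : psum (fun i : Fin n => if (i : ℕ) < t then w i else -(w i)) k + psum w k
      = 2 * psum w (min k t) := by
    unfold psum
    rw [← Finset.sum_add_distrib]
    have h1 : ∀ i ∈ Finset.univ.filter (fun i : Fin n => (i : ℕ) < k),
        ((if (i : ℕ) < t then w i else -(w i)) + w i)
          = if (i : ℕ) < t then 2 * w i else 0 := by
      intro i _; split_ifs <;> ring
    rw [Finset.sum_congr rfl h1, Finset.sum_ite, Finset.sum_const_zero, add_zero,
      Finset.filter_filter, Finset.mul_sum]
    apply Finset.sum_congr _ (fun _ _ => rfl)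
    ext i
    simp [lt_min_iff]
  omega

lemma psum_rho (w : Fin n → ℤ) (k : ℕ) :
    psum (rho w) k = 2 * psum w (min k (tt w)) - psum w k :=
  psum_rhoGen w (tt w) k

lemma steps_rho {w : Fin n → ℤ} (hw : Steps w) : Steps (rho w) := by
  intro i; unfold rho; rcases hw i with h | h <;> split_ifs <;> simp [h]

lemma tt_le (w : Fin n → ℤ) : tt w ≤ n := Nat.findGreatest_le n

lemma psum_tt {w : Fin n → ℤ} {k : ℕ} (hk : k ≤ n) (h : psum w k = -1) :
    psum w (tt w) = -1 :=
  Nat.findGreatest_spec (P := fun k => psum w k = -1) hk h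

lemma le_tt {w : Fin n → ℤ} {k : ℕ} (hk : k ≤ n) (h : psum w k = -1) : k ≤ tt w :=
  Nat.le_findGreatest hk h


lemma tt_rho_eq {w : Fin n → ℤ} (ht : psum w (tt w) = -1)
    (hafter : ∀ m, tt w < m → m ≤ n → psum (rho w) m ≠ -1) : tt (rho w) = tt w := by
  have h1 : psum (rho w) (tt w) = -1 := by rw [psum_rho, min_self]; omega
  have h2 : tt w ≤ tt (rho w) := le_tt (tt_le w) h1
  rcases eq_or_lt_of_le h2 with h | h
  · exact h.symm
  · exact absurd (psum_tt (tt_le w) h1) (hafter _ h (tt_le (rho w)))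

lemma rho_rho {w : Fin n → ℤ} (h : tt (rho w) = tt w) : rho (rho w) = w := by
  funext i
  simp only [rho, h]
  split_ifs <;> simp

lemma sideA {w : Fin n → ℤ} (hw : Steps w) {c : ℤ} (hc : 0 ≤ c) (hsum : psum w n = c)
    (hex : ∃ k, k ≤ n ∧ psum w k = -1) :
    psum w (tt w) = -1 ∧ ∀ m, tt w < m → m ≤ n → 0 ≤ psum w m := by
  obtain ⟨k, hk, hkv⟩ := hex
  refine ⟨psum_tt hk hkv, fun m hm hmn => ?_⟩
  by_contra hneg
  push_neg at hneg
  obtain ⟨k', hk1, hk2, hk3⟩ := ivt_up hw (-1) m n hmn le_rfl (by omega) (by omega)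
  have := le_tt hk2 hk3
  omega

lemma sideB {v : Fin n → ℤ} (hv : Steps v) {c : ℤ} (hc : 0 ≤ c) (hsum : psum v n = -2 - c) :
    psum v (tt v) = -1 ∧ ∀ m, tt v < m → m ≤ n → psum v m ≤ -2 := by
  have hex : ∃ k, 0 ≤ k ∧ k ≤ n ∧ psum v k = -1 :=
    ivt_down hv (-1) 0 n (Nat.zero_le n) le_rfl (by rw [psum_zero]; omega) (by omega)
  obtain ⟨k, _, hk, hkv⟩ := hex
  refine ⟨psum_tt hk hkv, fun m hm hmn => ?_⟩
  by_contra hge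
  push_neg at hge
  obtain ⟨k', hk1, hk2, hk3⟩ := ivt_down hv (-1) m n hmn le_rfl (by omega) (by omega)
  have := le_tt hk2 hk3
  omega


lemma rho_AtoB {d : ℕ} {c : ℤ} (hc : 0 ≤ c) {w : Fin n → ℤ}
    (hw : Steps w) (hsum : psum w n = c) (hP : P w (d + 1) (-1)) :
    Steps (rho w) ∧ psum (rho w) n = -2 - c ∧ P (rho w) d 1 ∧ rho (rho w) = w := by
  obtain ⟨f, hanti, hle, hval⟩ := hP
  have hf0 : psum w (f 0) = -1 := by have := hval 0; simpa using this
  obtain ⟨ht, hafter⟩ := sideA hw hc hsum ⟨f 0, hle 0, hf0⟩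
  have htn := tt_le w
  have hminn : min n (tt w) = tt w := min_eq_right htn
  have hsum' : psum (rho w) n = -2 - c := by
    rw [psum_rho, hminn, ht, hsum]; ring
  have hafter' : ∀ m, tt w < m → m ≤ n → psum (rho w) m ≠ -1 := by
    intro m hm hmn
    have h0 := hafter m hm hmn
    rw [psum_rho, min_eq_right (le_of_lt hm), ht]
    omega
  have httr : tt (rho w) = tt w := tt_rho_eq ht hafter'
  refine ⟨steps_rho hw, hsum', ?_, rho_rho httr⟩
  refine ⟨fun j => f j.succ, fun a b hab => hanti (Fin.succ_lt_succ_iff.mpr hab),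
    fun j => hle j.succ, fun j => ?_⟩
  have hjt : f j.succ ≤ tt w := by
    have h1 : f j.succ < f 0 := hanti (Fin.succ_pos j)
    have h2 : f 0 ≤ tt w := le_tt (hle 0) hf0
    omega
  rw [psum_rho, min_eq_left hjt]
  have h3 := hval j.succ
  rw [Fin.val_succ] at h3
  rw [h3, pow_succ]
  ring

lemma rho_BtoA {d : ℕ} {c : ℤ} (hc : 0 ≤ c) {v : Fin n → ℤ}
    (hv : Steps v) (hsum : psum v n = -2 - c) (hP : P v d 1) :
    Steps (rho v) ∧ psum (rho v) n = c ∧ P (rho v) (d + 1) (-1) ∧ rho (rho v) = v := by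
  obtain ⟨g, hanti, hle, hval⟩ := hP
  obtain ⟨ht, hafter⟩ := sideB hv hc hsum
  have htn := tt_le v
  have hminn : min n (tt v) = tt v := min_eq_right htn
  have hsum' : psum (rho v) n = c := by
    rw [psum_rho, hminn, ht, hsum]; ring
  have hafter' : ∀ m, tt v < m → m ≤ n → psum (rho v) m ≠ -1 := by
    intro m hm hmn
    have h0 := hafter m hm hmn
    rw [psum_rho, min_eq_right (le_of_lt hm), ht]
    omega
  have httr : tt (rho v) = tt v := tt_rho_eq ht hafter'
  have hgt : ∀ j : Fin d, g j < tt v := by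
    intro j
    have hd0 : 0 < d := j.pos
    set j0 : Fin d := ⟨0, hd0⟩ with hj0
    have hg0 : psum v (g j0) = 1 := by have := hval j0; simpa [hj0] using this
    have hg0t : g j0 < tt v := by
      rcases lt_or_ge (g j0) (tt v) with h | h
      · exact h
      · rcases eq_or_lt_of_le h with h' | h'
        · rw [← h', ht] at hg0; omega
        · have := hafter _ h' (hle j0); omega
    have : g j ≤ g j0 := hanti.antitone (by simp [hj0, Fin.le_def])
    omega
  refine ⟨steps_rho hv, hsum', ?_, rho_rho httr⟩
  refine ⟨Fin.cons (tt v) (fun j => g j), ?_, ?_, ?_⟩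
  · intro a b hab
    induction b using Fin.cases with
    | zero => exact absurd hab (Fin.not_lt_zero _)
    | succ b =>
      induction a using Fin.cases with
      | zero => simp only [Fin.cons_succ, Fin.cons_zero]; exact hgt b
      | succ a =>
        simp only [Fin.cons_succ]
        exact hanti (Fin.succ_lt_succ_iff.mp hab)
  · intro j
    induction j using Fin.cases with
    | zero => simp only [Fin.cons_zero]; exact htn
    | succ j => simp only [Fin.cons_succ]; exact hle j
  · intro j
    induction j using Fin.cases with
    | zero =>
      simp only [Fin.cons_zero, Fin.val_zero, pow_zero, mul_one]
      rw [psum_rho, min_self, ht]; omega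
    | succ j =>
      simp only [Fin.cons_succ, Fin.val_succ]
      rw [psum_rho, min_eq_left (le_of_lt (hgt j))]
      have h3 := hval j
      rw [h3, pow_succ]
      ring


lemma refl_ncard (n d : ℕ) (c : ℤ) (hc : 0 ≤ c) :
    {w : Fin n → ℤ | Steps w ∧ psum w n = c ∧ P w (d + 1) (-1)}.ncard
      = {w : Fin n → ℤ | Steps w ∧ psum w n = -2 - c ∧ P w d 1}.ncard := by
  set A := {w : Fin n → ℤ | Steps w ∧ psum w n = c ∧ P w (d + 1) (-1)} with hA
  set B := {w : Fin n → ℤ | Steps w ∧ psum w n = -2 - c ∧ P w d 1} with hB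
  have hAB : ∀ w ∈ A, rho w ∈ B ∧ rho (rho w) = w := by
    rintro w ⟨h1, h2, h3⟩
    obtain ⟨a, b, c', dd⟩ := rho_AtoB hc h1 h2 h3
    exact ⟨⟨a, b, c'⟩, dd⟩
  have hBA : ∀ v ∈ B, rho v ∈ A ∧ rho (rho v) = v := by
    rintro v ⟨h1, h2, h3⟩
    obtain ⟨a, b, c', dd⟩ := rho_BtoA hc h1 h2 h3
    exact ⟨⟨a, b, c'⟩, dd⟩
  have hinj : Set.InjOn rho A := by
    intro a ha b hb h
    rw [← (hAB a ha).2, ← (hAB b hb).2, h]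
  have himg : rho '' A = B := by
    ext v
    constructor
    · rintro ⟨w, hw, rfl⟩; exact (hAB w hw).1
    · intro hv
      exact ⟨rho v, (hBA v hv).1, (hBA v hv).2⟩
  rw [← himg, Set.ncard_image_of_injOn hinj]

lemma flip_ncard (n d : ℕ) (c : ℤ) :
    {w : Fin n → ℤ | Steps w ∧ psum w n = -2 - c ∧ P w d 1}.ncard
      = {w : Fin n → ℤ | Steps w ∧ psum w n = 2 + c ∧ P w d (-1)}.ncard := by
  set A := {w : Fin n → ℤ | Steps w ∧ psum w n = -2 - c ∧ P w d 1} with hA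
  set B := {w : Fin n → ℤ | Steps w ∧ psum w n = 2 + c ∧ P w d (-1)} with hB
  have hmem : ∀ (e : ℤ) (ε : ℤ) (w : Fin n → ℤ), Steps w → psum w n = e → P w d ε →
      Steps (fun i => -(w i)) ∧ psum (fun i => -(w i)) n = -e ∧ P (fun i => -(w i)) d (-ε) := by
    intro e ε w h1 h2 ⟨f, ha, hb, hcv⟩
    refine ⟨steps_neg h1, by rw [psum_neg, h2], f, ha, hb, fun j => ?_⟩
    rw [psum_neg, hcv j]; ring
  have hinj : Set.InjOn (fun w : Fin n → ℤ => fun i => -(w i)) A := by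
    intro a _ b _ h
    funext i
    have := congrFun h i
    simp only at this
    omega
  have himg : (fun w : Fin n → ℤ => fun i => -(w i)) '' A = B := by
    ext v
    constructor
    · rintro ⟨w, ⟨h1, h2, h3⟩, rfl⟩
      obtain ⟨a, b, c'⟩ := hmem _ _ w h1 h2 h3
      refine ⟨a, by rw [b]; ring_nf, ?_⟩
      convert c' using 2

    · rintro ⟨h1, h2, h3⟩
      refine ⟨fun i => -(v i), ?_, by funext i; simp⟩
      obtain ⟨a, b, c'⟩ := hmem _ _ v h1 h2 h3
      refine ⟨a, by rw [b]; ring_nf, ?_⟩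
      convert c' using 2
      norm_num

  rw [← himg, Set.ncard_image_of_injOn hinj]

lemma key_ncard (n : ℕ) (d : ℕ) : ∀ c : ℤ, 0 ≤ c →
    {w : Fin n → ℤ | Steps w ∧ psum w n = c ∧ P w d (-1)}.ncard
      = {w : Fin n → ℤ | Steps w ∧ psum w n = c + 2 * d}.ncard := by
  induction d with
  | zero =>
    intro c hc
    have hs : {w : Fin n → ℤ | Steps w ∧ psum w n = c ∧ P w 0 (-1)}
        = {w : Fin n → ℤ | Steps w ∧ psum w n = c + 2 * (0 : ℕ)} := by
      ext w
      simp only [Set.mem_setOf_eq, Nat.cast_zero, mul_zero, add_zero]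
      constructor
      · rintro ⟨h1, h2, _⟩; exact ⟨h1, h2⟩
      · rintro ⟨h1, h2⟩
        exact ⟨h1, h2, Fin.elim0, fun a => a.elim0, fun a => a.elim0, fun a => a.elim0⟩
    rw [hs]
  | succ d ih =>
    intro c hc
    rw [refl_ncard n d c hc, flip_ncard n d c, ih (2 + c) (by omega)]
    congr 1
    ext w
    simp only [Set.mem_setOf_eq]
    constructor <;> rintro ⟨h1, h2⟩ <;> refine ⟨h1, ?_⟩ <;> rw [h2] <;> push_cast <;> ring

lemma count0 (n k : ℕ) :
    {w : Fin n → ℤ | Steps w ∧ psum w n = 2 * (k : ℤ) - n}.ncard = n.choose k := by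
  classical
  set F : Finset (Fin n) → (Fin n → ℤ) := fun S i => if i ∈ S then 1 else -1 with hF
  have hpsum_univ : ∀ w : Fin n → ℤ, psum w n = ∑ i, w i := by
    intro w
    unfold psum
    congr 1
    ext i
    simp [i.isLt]
  have hFsum : ∀ S : Finset (Fin n), psum (F S) n = 2 * (S.card : ℤ) - n := by
    intro S
    rw [hpsum_univ]
    have h1 : ∀ i : Fin n, F S i = (if i ∈ S then (2 : ℤ) else 0) - 1 := by
      intro i; simp only [hF]; split_ifs <;> ring
    rw [Finset.sum_congr rfl (fun i _ => h1 i), Finset.sum_sub_distrib]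
    rw [Finset.sum_ite_mem, Finset.univ_inter, Finset.sum_const, Finset.sum_const]
    simp [mul_comm]
  have hinj : Set.InjOn F {S : Finset (Fin n) | S.card = k} := by
    intro S _ T _ h
    ext i
    have := congrFun h i
    simp only [hF] at this
    by_cases hS : i ∈ S <;> by_cases hT : i ∈ T <;>
      simp [hS, hT] at this ⊢ <;> omega
  have himg : F '' {S : Finset (Fin n) | S.card = k}
      = {w : Fin n → ℤ | Steps w ∧ psum w n = 2 * (k : ℤ) - n} := by
    ext w
    constructor
    · rintro ⟨S, hS, rfl⟩
      refine ⟨fun i => by simp only [hF]; split_ifs <;> simp, ?_⟩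
      rw [hFsum S, hS]
    · rintro ⟨h1, h2⟩
      refine ⟨Finset.univ.filter (fun i => w i = 1), ?_, ?_⟩
      · have heq : F (Finset.univ.filter (fun i => w i = 1)) = w := by
          funext i
          rcases h1 i with h | h <;> simp [hF, h]
        have := hFsum (Finset.univ.filter (fun i => w i = 1))
        rw [heq, h2] at this
        simp only [Set.mem_setOf_eq]
        omega
      · funext i
        rcases h1 i with h | h <;> simp [hF, h]
  rw [← himg, Set.ncard_image_of_injOn hinj]
  have hset : {S : Finset (Fin n) | S.card = k}
      = ↑(Finset.powersetCard k (Finset.univ : Finset (Fin n))) := by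
    ext S
    simp [Finset.mem_powersetCard, Finset.subset_univ]
  rw [hset, Set.ncard_coe_finset, Finset.card_powersetCard, Finset.card_univ,
    Fintype.card_fin]

end WalkAux

theorem stmt18 (n d : ℕ) (hd : d ≤ n / 2) :
    {w : Fin n → ℤ |
        (∀ i, w i = 1 ∨ w i = -1) ∧
          psum w n = (n % 2 : ℤ) ∧
          (∃ f : Fin d → ℕ, StrictAnti f ∧ (∀ j, f j ≤ n) ∧
            ∀ j : Fin d, psum w (f j) = (-1 : ℤ) ^ ((j : ℕ) + 1))}.ncard
      = Nat.choose n ((n + 1) / 2 + d) := by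
  have hstep : {w : Fin n → ℤ |
        (∀ i, w i = 1 ∨ w i = -1) ∧
          psum w n = (n % 2 : ℤ) ∧
          (∃ f : Fin d → ℕ, StrictAnti f ∧ (∀ j, f j ≤ n) ∧
            ∀ j : Fin d, psum w (f j) = (-1 : ℤ) ^ ((j : ℕ) + 1))}
      = {w : Fin n → ℤ | WalkAux.Steps w ∧ psum w n = (n % 2 : ℤ) ∧ WalkAux.P w d (-1)} := by
    ext w
    simp only [Set.mem_setOf_eq, WalkAux.Steps, WalkAux.P]
    constructor <;> rintro ⟨h1, h2, f, ha, hb, hv⟩ <;>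
      exact ⟨h1, h2, f, ha, hb, fun j => by rw [hv j, pow_succ]; ring⟩
  rw [hstep, WalkAux.key_ncard n d _ (by omega)]
  have hk : ((n % 2 : ℤ) + 2 * d) = 2 * (((n + 1) / 2 + d : ℕ) : ℤ) - n := by
    push_cast; omega
  have hs2 : {w : Fin n → ℤ | WalkAux.Steps w ∧ psum w n = (n % 2 : ℤ) + 2 * d}
      = {w : Fin n → ℤ | WalkAux.Steps w ∧
          psum w n = 2 * (((n + 1) / 2 + d : ℕ) : ℤ) - n} := by
    rw [hk]
  rw [hs2, WalkAux.count0]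
end

section
/- For ±1-walks of length n starting at 0 ending at n mod 2, the number of walks whose minimal partial sum is exactly −d (for 0 ≤ d ≤ ⌊n/2⌋) equals C(n, ⌈n/2⌉+d) − C(n, ⌈n/2⌉+d+1), the same as the number of nonnegative walks of length n ending at 2d + (n mod 2). -/
open Finset

lemma psum_zero {n : ℕ} (w : Fin n → ℤ) : psum w 0 = 0 := by
  simp [psum]

lemma psum_succ {n : ℕ} (w : Fin n → ℤ) (k : ℕ) :
    psum w (k + 1) = psum w k + (if h : k < n then w ⟨k, h⟩ else 0) := by
  unfold psum
  by_cases h : k < n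
  · rw [dif_pos h]
    have hins : (univ.filter (fun i : Fin n => (i : ℕ) < k + 1))
        = insert (⟨k, h⟩ : Fin n) (univ.filter (fun i : Fin n => (i : ℕ) < k)) := by
      ext i
      simp only [mem_filter, mem_univ, true_and, mem_insert, Fin.ext_iff]
      omega
    rw [hins, Finset.sum_insert (by simp)]
    ring
  · rw [dif_neg h]
    have hset : (univ.filter (fun i : Fin n => (i : ℕ) < k + 1))
        = univ.filter (fun i : Fin n => (i : ℕ) < k) := by
      ext i
      have := i.isLt
      simp only [mem_filter, mem_univ, true_and]
      omega
    rw [hset, add_zero]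

lemma psum_of_ge {n : ℕ} (w : Fin n → ℤ) {k : ℕ} (h : n ≤ k) : psum w k = psum w n := by
  unfold psum
  congr 1
  ext i
  have := i.isLt
  simp only [mem_filter, mem_univ, true_and]
  omega

lemma psum_snoc_le {n : ℕ} (v : Fin n → ℤ) (x : ℤ) {k : ℕ} (hk : k ≤ n) :
    psum (Fin.snoc v x) k = psum v k := by
  induction k with
  | zero => simp [psum_zero]
  | succ k ih =>
    have hk' : k < n := by omega
    rw [psum_succ, psum_succ, ih (by omega), dif_pos hk', dif_pos (by omega : k < n + 1)]
    congr 1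
    exact Fin.snoc_castSucc (α := fun _ : Fin (n+1) => ℤ) (p := v) (x := x) (i := ⟨k, hk'⟩)

lemma psum_snoc_top {n : ℕ} (v : Fin n → ℤ) (x : ℤ) :
    psum (Fin.snoc v x) (n + 1) = psum v n + x := by
  rw [psum_succ, psum_snoc_le v x le_rfl, dif_pos (by omega : n < n + 1)]
  congr 1
  exact Fin.snoc_last (α := fun _ : Fin (n+1) => ℤ) (p := v) (x := x)

def ups {n : ℕ} (w : Fin n → ℤ) : ℕ := ∑ i, if w i = 1 then 1 else 0

lemma ups_snoc {n : ℕ} (v : Fin n → ℤ) (x : ℤ) :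
    ups (Fin.snoc v x) = ups v + (if x = 1 then 1 else 0) := by
  unfold ups
  rw [Fin.sum_univ_castSucc]
  simp [Fin.snoc_castSucc, Fin.snoc_last]

lemma psum_top {n : ℕ} (w : Fin n → ℤ) (hw : ∀ i, w i = 1 ∨ w i = -1) :
    psum w n = 2 * (ups w : ℤ) - n := by
  induction n with
  | zero => simp [psum_zero, ups]
  | succ n ih =>
    have h1 : psum w (n + 1) = psum (Fin.init w) n + w (Fin.last n) := by
      conv_lhs => rw [← Fin.snoc_init_self w]
      exact psum_snoc_top _ _
    have h2 : ups w = ups (Fin.init w) + if w (Fin.last n) = 1 then 1 else 0 := by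
      conv_lhs => rw [← Fin.snoc_init_self w]
      exact ups_snoc _ _
    have ih' := ih (Fin.init w) (fun i => hw _)
    rcases hw (Fin.last n) with h | h <;>
      simp only [h1, h2, ih', h, if_pos, if_neg (by norm_num : (-1 : ℤ) ≠ 1)] <;>
      push_cast <;> ring

def snocZ {n : ℕ} (v : Fin n → ℤ) (x : ℤ) : Fin (n + 1) → ℤ := Fin.snoc v x

lemma psum_snocZ_le {n : ℕ} (v : Fin n → ℤ) (x : ℤ) {k : ℕ} (hk : k ≤ n) :
    psum (snocZ v x) k = psum v k := psum_snoc_le v x hk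

lemma psum_snocZ_top {n : ℕ} (v : Fin n → ℤ) (x : ℤ) :
    psum (snocZ v x) (n + 1) = psum v n + x := psum_snoc_top v x

lemma ups_snocZ {n : ℕ} (v : Fin n → ℤ) (x : ℤ) :
    ups (snocZ v x) = ups v + (if x = 1 then 1 else 0) := ups_snoc v x

lemma snocZ_init_self {n : ℕ} (w : Fin (n + 1) → ℤ) :
    snocZ (Fin.init w) (w (Fin.last n)) = w := Fin.snoc_init_self w

lemma init_snocZ {n : ℕ} (v : Fin n → ℤ) (x : ℤ) : Fin.init (snocZ v x) = v := by
  simp [snocZ]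

lemma snocZ_castSucc {n : ℕ} (v : Fin n → ℤ) (x : ℤ) (i : Fin n) :
    snocZ v x (Fin.castSucc i) = v i :=
  Fin.snoc_castSucc (α := fun _ : Fin (n+1) => ℤ) (p := v) (x := x) (i := i)

lemma snocZ_last {n : ℕ} (v : Fin n → ℤ) (x : ℤ) : snocZ v x (Fin.last n) = x :=
  Fin.snoc_last (α := fun _ : Fin (n+1) => ℤ) (p := v) (x := x)
def walkSet (n : ℕ) : Finset (Fin n → ℤ) :=
  Fintype.piFinset (fun _ : Fin n => ({1, -1} : Finset ℤ))

lemma mem_walkSet {n : ℕ} {w : Fin n → ℤ} :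
    w ∈ walkSet n ↔ ∀ i, w i = 1 ∨ w i = -1 := by
  simp [walkSet, Fintype.mem_piFinset]

def NW (n u c : ℕ) : Finset (Fin n → ℤ) :=
  (walkSet n).filter (fun w => ups w = u ∧ ∀ k ≤ n, -(c : ℤ) ≤ psum w k)

lemma mem_NW {n u c : ℕ} {w : Fin n → ℤ} :
    w ∈ NW n u c ↔ (∀ i, w i = 1 ∨ w i = -1) ∧ ups w = u ∧ ∀ k ≤ n, -(c : ℤ) ≤ psum w k := by
  simp [NW, Finset.mem_filter, mem_walkSet, and_assoc]

lemma NW_zero_card (u c : ℕ) : (NW 0 u c).card = if u = 0 then 1 else 0 := by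
  split_ifs with hu
  · subst hu
    rw [Finset.card_eq_one]
    refine ⟨fun i => i.elim0, ?_⟩
    ext w
    simp only [mem_NW, Finset.mem_singleton]
    constructor
    · intro _; funext i; exact i.elim0
    · rintro rfl
      refine ⟨fun i => i.elim0, by simp [ups], ?_⟩
      intro k hk
      interval_cases k
      simp [psum_zero]
  · rw [Finset.card_eq_zero]
    ext w
    simp only [mem_NW, Finset.notMem_empty, iff_false]
    rintro ⟨-, hu2, -⟩
    exact hu (by simpa [ups] using hu2.symm)

lemma NW_empty_card {n u c : ℕ} (h : 2 * u + c < n) : (NW n u c).card = 0 := by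
  rw [Finset.card_eq_zero]
  ext w
  simp only [mem_NW, Finset.notMem_empty, iff_false]
  rintro ⟨hw, rfl, hb⟩
  have h1 := hb n le_rfl
  have h2 := psum_top w hw
  omega

lemma snocZ_mem_NW {n u c : ℕ} (v : Fin n → ℤ) (x : ℤ) (hx : x = 1 ∨ x = -1)
    (hv : v ∈ NW n u c) (hend : -(c : ℤ) ≤ 2 * u - n + x) :
    snocZ v x ∈ NW (n + 1) (u + if x = 1 then 1 else 0) c := by
  rw [mem_NW] at hv ⊢
  obtain ⟨hpm, hups, hb⟩ := hv
  refine ⟨?_, ?_, ?_⟩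
  · intro i
    rcases Nat.lt_or_ge (i : ℕ) n with hi | hi
    · have h4 : i = Fin.castSucc ⟨(i : ℕ), hi⟩ := by ext; rfl
      rw [h4, snocZ_castSucc]
      exact hpm _
    · have h4 : i = Fin.last n := by ext; simp; omega
      rw [h4, snocZ_last]
      exact hx
  · rw [ups_snocZ, hups]
  · intro k hk
    rcases Nat.lt_or_ge k (n + 1) with hk' | hk'
    · rw [psum_snocZ_le _ _ (by omega : k ≤ n)]
      exact hb k (by omega)
    · have hkeq : k = n + 1 := by omega
      subst hkeq
      rw [psum_snocZ_top, psum_top v hpm, hups]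
      exact hend

lemma init_mem_NW {n u c : ℕ} (w : Fin (n + 1) → ℤ) (hw : w ∈ NW (n + 1) u c) :
    Fin.init w ∈ NW n (u - if w (Fin.last n) = 1 then 1 else 0) c := by
  rw [mem_NW] at hw ⊢
  obtain ⟨hpm, hups, hb⟩ := hw
  have hsn : snocZ (Fin.init w) (w (Fin.last n)) = w := snocZ_init_self w
  refine ⟨fun i => hpm (Fin.castSucc i), ?_, ?_⟩
  · have h2 := ups_snocZ (Fin.init w) (w (Fin.last n))
    rw [hsn] at h2
    omega
  · intro k hk
    have := hb k (by omega)
    rwa [← hsn, psum_snocZ_le _ _ hk] at this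


open Classical in
lemma NW_cneg {n u c : ℕ} (h : n + 1 ≤ 2 * u + c) :
    ((NW (n + 1) u c).filter (fun w => ¬ w (Fin.last n) = 1)).card
      = (NW n u c).card := by
  refine Finset.card_nbij' (i := fun w => Fin.init w) (j := fun v => snocZ v (-1))
    ?_ ?_ ?_ ?_
  · intro w hw
    show Fin.init w ∈ NW n u c
    rw [Finset.mem_coe, Finset.mem_filter] at hw
    obtain ⟨hw', hlast⟩ := hw
    have hlast' : w (Fin.last n) = -1 := by
      rcases (mem_NW.mp hw').1 (Fin.last n) with h1 | h1 <;> simp [h1] at hlast ⊢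
    have := init_mem_NW w hw'
    rw [hlast'] at this
    simpa using this
  · intro v hv
    show snocZ v (-1) ∈ (NW (n + 1) u c).filter (fun w => ¬ w (Fin.last n) = 1)
    rw [Finset.mem_filter]
    have hups := (mem_NW.mp hv).2.1
    constructor
    · have := snocZ_mem_NW v (-1) (Or.inr rfl) hv (by push_cast; omega)
      simpa using this
    · rw [snocZ_last]
      norm_num
  · intro w hw
    show snocZ (Fin.init w) (-1) = w
    rw [Finset.mem_coe, Finset.mem_filter] at hw
    have hlast' : w (Fin.last n) = -1 := by
      rcases (mem_NW.mp hw.1).1 (Fin.last n) with h1 | h1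
      · exact absurd h1 hw.2
      · exact h1
    rw [← hlast']
    exact snocZ_init_self w
  · intro v hv
    show Fin.init (snocZ v (-1)) = v
    exact init_snocZ _ _

open Classical in
lemma NW_cpos_zero {n c : ℕ} :
    ((NW (n + 1) 0 c).filter (fun w => w (Fin.last n) = 1)).card = 0 := by
  rw [Finset.card_eq_zero]
  ext w
  simp only [Finset.mem_filter, Finset.notMem_empty, iff_false, not_and]
  intro hw hlast
  have h2 := ups_snocZ (Fin.init w) (w (Fin.last n))
  rw [snocZ_init_self w, hlast] at h2
  have hups := (mem_NW.mp hw).2.1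
  simp at h2
  omega

open Classical in
lemma NW_cpos {n u c : ℕ} (h : n + 1 ≤ 2 * u + c) (hu : u ≠ 0) :
    ((NW (n + 1) u c).filter (fun w => w (Fin.last n) = 1)).card
      = (NW n (u - 1) c).card := by
  refine Finset.card_nbij' (i := fun w => Fin.init w) (j := fun v => snocZ v 1)
    ?_ ?_ ?_ ?_
  · intro w hw
    show Fin.init w ∈ NW n (u - 1) c
    rw [Finset.mem_coe, Finset.mem_filter] at hw
    obtain ⟨hw', hlast⟩ := hw
    have := init_mem_NW w hw'
    rw [hlast] at this
    simpa using this
  · intro v hv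
    show snocZ v 1 ∈ (NW (n + 1) u c).filter (fun w => w (Fin.last n) = 1)
    rw [Finset.mem_filter]
    have hups := (mem_NW.mp hv).2.1
    constructor
    · have := snocZ_mem_NW v 1 (Or.inl rfl) hv (by push_cast; omega)
      have hu1 : u - 1 + (if (1 : ℤ) = 1 then 1 else 0) = u := by simp; omega
      rwa [hu1] at this
    · exact snocZ_last v 1
  · intro w hw
    show snocZ (Fin.init w) 1 = w
    rw [Finset.mem_coe, Finset.mem_filter] at hw
    rw [← hw.2]
    exact snocZ_init_self w
  · intro v hv
    show Fin.init (snocZ v 1) = v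
    exact init_snocZ _ _

open Classical in
lemma NW_rec {n u c : ℕ} (h : n + 1 ≤ 2 * u + c) :
    (NW (n + 1) u c).card
      = (if u = 0 then 0 else (NW n (u - 1) c).card) + (NW n u c).card := by
  have hsplit := Finset.card_filter_add_card_filter_not
    (s := NW (n + 1) u c) (p := fun w => w (Fin.last n) = 1)
  have cneg := NW_cneg h
  split_ifs with hu
  · subst hu
    have cpos := NW_cpos_zero (n := n) (c := c)
    rw [← hsplit, cpos, cneg]
  · have cpos := NW_cpos h hu
    rw [← hsplit, cpos, cneg]

lemma NW_card (n : ℕ) : ∀ u c : ℕ, n ≤ 2 * u + c + 1 →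
    ((NW n u c).card : ℤ) = (n.choose u : ℤ) - (n.choose (u + c + 1) : ℤ) := by
  induction n with
  | zero =>
    intro u c _
    rw [NW_zero_card]
    rcases Nat.eq_zero_or_pos u with hu | hu
    · subst hu
      simp [Nat.choose]
    · rw [if_neg (by omega)]
      rw [Nat.choose_eq_zero_of_lt (by omega), Nat.choose_eq_zero_of_lt (by omega)]
      simp
  | succ n ih =>
    intro u c h
    by_cases hb : n + 1 ≤ 2 * u + c
    · rw [NW_rec hb]
      rcases Nat.eq_zero_or_pos u with hu | hu
      · subst hu
        rw [if_pos rfl]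
        have h1 := ih 0 c (by omega)
        have h2 : Nat.choose n (0 + c + 1) = 0 := Nat.choose_eq_zero_of_lt (by omega)
        have h3 : Nat.choose (n + 1) (0 + c + 1) = 0 := Nat.choose_eq_zero_of_lt (by omega)
        rw [h2] at h1
        push_cast
        rw [h3] at *
        simp at h1 ⊢
        omega
      · obtain ⟨u', rfl⟩ : ∃ u', u = u' + 1 := ⟨u - 1, by omega⟩
        rw [if_neg (by omega)]
        have h1 := ih u' c (by omega)
        have h2 := ih (u' + 1) c (by omega)
        have hp1 : Nat.choose (n + 1) (u' + 1) = Nat.choose n u' + Nat.choose n (u' + 1) :=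
          Nat.choose_succ_succ n u'
        have hp2 : Nat.choose (n + 1) (u' + 1 + c + 1)
            = Nat.choose n (u' + c + 1) + Nat.choose n (u' + 1 + c + 1) := by
          have e1 : u' + 1 + c + 1 = (u' + c + 1) + 1 := by omega
          have e2 : u' + c + 1 + 1 = u' + 1 + c + 1 := by omega
          rw [e1, Nat.choose_succ_succ n (u' + c + 1)]
        have hsimp : u' + 1 - 1 = u' := by omega
        rw [hsimp]
        push_cast [hp1, hp2] at *
        omega
    · have hbd : 2 * u + c = n := by omega
      have hempty : (NW (n + 1) u c).card = 0 := NW_empty_card (by omega)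
      rw [hempty]
      have hsymm : Nat.choose (n + 1) (u + c + 1) = Nat.choose (n + 1) u := by
        have : u + c + 1 = (n + 1) - u := by omega
        rw [this, Nat.choose_symm (by omega)]
      rw [hsymm]
      simp

lemma ups_eq_iff {n : ℕ} (w : Fin n → ℤ) (hw : ∀ i, w i = 1 ∨ w i = -1) (m : ℕ) :
    psum w n = 2 * (m : ℤ) - n ↔ ups w = m := by
  rw [psum_top w hw]
  constructor <;> intro h <;> omega

lemma count2 (n d : ℕ) :
    {w : Fin n → ℤ |
        (∀ i, w i = 1 ∨ w i = -1) ∧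
          (∀ k, 0 ≤ psum w k) ∧
          psum w n = 2 * (d : ℤ) + (n % 2 : ℤ)}.ncard
      = Nat.choose n ((n + 1) / 2 + d) - Nat.choose n ((n + 1) / 2 + d + 1) := by
  classical
  set u₀ := (n + 1) / 2 with hu₀
  have hend : (2 * (d : ℤ) + (n % 2 : ℤ)) = 2 * ((u₀ + d : ℕ) : ℤ) - n := by
    push_cast
    omega
  have hset : {w : Fin n → ℤ |
        (∀ i, w i = 1 ∨ w i = -1) ∧
          (∀ k, 0 ≤ psum w k) ∧
          psum w n = 2 * (d : ℤ) + (n % 2 : ℤ)} = ↑(NW n (u₀ + d) 0) := by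
    ext w
    simp only [Set.mem_setOf_eq, Finset.mem_coe, mem_NW]
    constructor
    · rintro ⟨hpm, hb, hendv⟩
      refine ⟨hpm, ?_, fun k _ => by simpa using hb k⟩
      rw [← ups_eq_iff w hpm, ← hend]
      exact hendv
    · rintro ⟨hpm, hups, hb⟩
      refine ⟨hpm, ?_, ?_⟩
      · intro k
        rcases le_or_gt k n with hk | hk
        · simpa using hb k hk
        · rw [psum_of_ge w hk.le]
          simpa using hb n le_rfl
      · rw [hend, ups_eq_iff w hpm]
        exact hups
  rw [hset, Set.ncard_coe_finset]
  have h1 := NW_card n (u₀ + d) 0 (by omega)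
  norm_num at h1
  omega

lemma count1 (n d : ℕ) :
    {w : Fin n → ℤ |
        (∀ i, w i = 1 ∨ w i = -1) ∧
          psum w n = (n % 2 : ℤ) ∧
          (∀ k ≤ n, -(d : ℤ) ≤ psum w k) ∧
          (∃ k ≤ n, psum w k = -(d : ℤ))}.ncard
      = Nat.choose n ((n + 1) / 2 + d) - Nat.choose n ((n + 1) / 2 + d + 1) := by
  classical
  set u₀ := (n + 1) / 2 with hu₀
  have hend : ((n % 2 : ℤ)) = 2 * ((u₀ : ℕ) : ℤ) - n := by
    push_cast
    omega
  rcases d with _ | d'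
  · have hset : {w : Fin n → ℤ |
        (∀ i, w i = 1 ∨ w i = -1) ∧
          psum w n = (n % 2 : ℤ) ∧
          (∀ k ≤ n, -((0 : ℕ) : ℤ) ≤ psum w k) ∧
          (∃ k ≤ n, psum w k = -((0 : ℕ) : ℤ))} = ↑(NW n u₀ 0) := by
      ext w
      simp only [Set.mem_setOf_eq, Finset.mem_coe, mem_NW]
      constructor
      · rintro ⟨hpm, hendv, hb, -⟩
        refine ⟨hpm, ?_, hb⟩
        rw [← ups_eq_iff w hpm, ← hend]
        exact hendv
      · rintro ⟨hpm, hups, hb⟩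
        refine ⟨hpm, ?_, hb, 0, by omega, by simp [psum_zero]⟩
        rw [hend, ups_eq_iff w hpm]
        exact hups
    rw [hset, Set.ncard_coe_finset]
    have h1 := NW_card n u₀ 0 (by omega)
    norm_num at h1
    simp only [Nat.add_zero]
    omega
  · have hsub : NW n u₀ d' ⊆ NW n u₀ (d' + 1) := by
      intro w hw
      rw [mem_NW] at hw ⊢
      refine ⟨hw.1, hw.2.1, fun k hk => le_trans ?_ (hw.2.2 k hk)⟩
      push_cast
      omega
    have hset : {w : Fin n → ℤ |
        (∀ i, w i = 1 ∨ w i = -1) ∧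
          psum w n = (n % 2 : ℤ) ∧
          (∀ k ≤ n, -((d' + 1 : ℕ) : ℤ) ≤ psum w k) ∧
          (∃ k ≤ n, psum w k = -((d' + 1 : ℕ) : ℤ))}
        = ↑(NW n u₀ (d' + 1) \ NW n u₀ d') := by
      ext w
      simp only [Set.mem_setOf_eq, Finset.coe_sdiff, Set.mem_diff, Finset.mem_coe, mem_NW]
      constructor
      · rintro ⟨hpm, hendv, hb, k, hk, hval⟩
        refine ⟨⟨hpm, ?_, hb⟩, ?_⟩
        · rw [← ups_eq_iff w hpm, ← hend]
          exact hendv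
        · rintro ⟨-, -, hb'⟩
          have := hb' k hk
          rw [hval] at this
          push_cast at this
          omega
      · rintro ⟨⟨hpm, hups, hb⟩, hnot⟩
        refine ⟨hpm, ?_, hb, ?_⟩
        · rw [hend, ups_eq_iff w hpm]
          exact hups
        · by_contra hc
          push_neg at hc
          apply hnot
          refine ⟨hpm, hups, ?_⟩
          intro k hk
          have h1 := hb k hk
          have h2 := hc k hk
          push_cast at h1 ⊢
          omega
    rw [hset, Set.ncard_coe_finset, Finset.card_sdiff_of_subset hsub]
    have h1 := NW_card n u₀ (d' + 1) (by omega)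
    have h2 := NW_card n u₀ d' (by omega)
    have hle := Finset.card_le_card hsub
    have e1 : u₀ + (d' + 1) = u₀ + d' + 1 := by omega
    rw [e1] at h1 ⊢
    omega

theorem stmt19 (n d : ℕ) (hd : d ≤ n / 2) :
    {w : Fin n → ℤ |
        (∀ i, w i = 1 ∨ w i = -1) ∧
          psum w n = (n % 2 : ℤ) ∧
          (∀ k ≤ n, -(d : ℤ) ≤ psum w k) ∧
          (∃ k ≤ n, psum w k = -(d : ℤ))}.ncard
      = Nat.choose n ((n + 1) / 2 + d) - Nat.choose n ((n + 1) / 2 + d + 1)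
    ∧ {w : Fin n → ℤ |
        (∀ i, w i = 1 ∨ w i = -1) ∧
          psum w n = (n % 2 : ℤ) ∧
          (∀ k ≤ n, -(d : ℤ) ≤ psum w k) ∧
          (∃ k ≤ n, psum w k = -(d : ℤ))}.ncard
      = {w : Fin n → ℤ |
          (∀ i, w i = 1 ∨ w i = -1) ∧
            (∀ k, 0 ≤ psum w k) ∧
            psum w n = 2 * (d : ℤ) + (n % 2 : ℤ)}.ncard := by
  refine ⟨count1 n d, ?_⟩
  rw [count1 n d, count2 n d]
end
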